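/- Fix integers n ≥ 1 and b ≠ 0. Let f ∈ ℤ[x] be a separable b-reciprocal polynomial of degree 2n. Then every root of f (in an algebraic closure of ℚ) is nonzero, the map α ↦ b/α permutes the roots of f, and the order of the Galois group of the splitting field of f over ℚ divides 2^n · n!. -/

import Mathlib

open Polynomial

open Equiv in

theorem centralizer_involution_card_dvd {X : Type*} [Fintype X]
    (n : ℕ) (σ : Equiv.Perm X) (hσ : σ * σ = 1)
    (hcard : Fintype.card X = 2 * n)
    (hfix : ∀ x y z : X, σ x = x → σ y = y → σ z = z → x = y ∨ x = z ∨ y = z) :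
    Nat.card (Subgroup.centralizer {σ}) ∣ 2 ^ n * n.factorial := by
  classical
  have hσ2 : ∀ x, σ (σ x) = x := fun x => by
    have := congrArg (fun p : Equiv.Perm X => p x) hσ
    simpa [Equiv.Perm.mul_apply] using this
  -- the setoid of σ-orbits
  let s : Setoid X :=
    { r := fun x y => y = x ∨ y = σ x
      iseqv := by
        constructor
        · exact fun x => Or.inl rfl
        · rintro x y (rfl | rfl)
          · exact Or.inl rfl
          · exact Or.inr (hσ2 x).symm
        · rintro x y z (rfl | rfl) h
          · exact h
          · rcases h with rfl | rfl
            · exact Or.inr rfl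
            · exact Or.inl (hσ2 x) }
  letI := s
  let Q := Quotient s
  set C := Subgroup.centralizer ({σ} : Set (Equiv.Perm X)) with hC
  have hcomm : ∀ τ ∈ C, ∀ x, τ (σ x) = σ (τ x) := by
    intro τ hτ x
    have h := (Subgroup.mem_centralizer_singleton_iff).mp hτ
    have := congrArg (fun p : Equiv.Perm X => p x) h
    simpa [Equiv.Perm.mul_apply] using this
  -- induced relation-preservation
  have hrel : ∀ τ : C, ∀ a b : X, s.r a b ↔ s.r ((τ : Equiv.Perm X) a) ((τ : Equiv.Perm X) b) := by
    have fwd : ∀ τ : C, ∀ a b : X, s.r a b → s.r ((τ : Equiv.Perm X) a) ((τ : Equiv.Perm X) b) := by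
      rintro τ a b (rfl | rfl)
      · exact Or.inl rfl
      · exact Or.inr (by rw [hcomm τ τ.2 a])
    intro τ a b
    refine ⟨fwd τ a b, fun h => ?_⟩
    have := fwd τ⁻¹ _ _ h
    simpa using this
  -- fixedness of an orbit
  have hfixwd : ∀ a b : X, s.r a b → ((σ a = a) = (σ b = b)) := by
    rintro a b (rfl | rfl)
    · rfl
    · simp only [hσ2]
      exact eq_iff_iff.mpr eq_comm
  let fixedQ : Q → Prop := Quotient.lift (fun x => σ x = x) hfixwd
  -- the homomorphism to permutations of (nonfixed orbits) × (fixed orbits)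
  have hpres : ∀ (τ : C) (q : Q), fixedQ (Quotient.congr (τ : Equiv.Perm X) (hrel τ) q) = fixedQ q := by
    intro τ q
    induction q using Quotient.ind with
    | _ x =>
      show (σ ((τ : Equiv.Perm X) x) = (τ : Equiv.Perm X) x) = (σ x = x)
      rw [← hcomm τ τ.2 x, eq_iff_iff]
      exact ⟨fun h => (τ : Equiv.Perm X).injective h, fun h => by rw [h]⟩
  let Φ : C →* Equiv.Perm {q : Q // ¬ fixedQ q} × Equiv.Perm {q : Q // fixedQ q} :=
    { toFun := fun τ =>
        (Equiv.Perm.subtypePerm (Quotient.congr (τ : Equiv.Perm X) (hrel τ))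
            (fun q => by simp [hpres τ q]),
         Equiv.Perm.subtypePerm (Quotient.congr (τ : Equiv.Perm X) (hrel τ))
            (fun q => by simp [hpres τ q]))
      map_one' := by
        refine Prod.ext ?_ ?_ <;>
        · ext q
          obtain ⟨q, hq⟩ := q
          induction q using Quotient.ind with
          | _ x => rfl
      map_mul' := fun τ₁ τ₂ => by
        refine Prod.ext ?_ ?_ <;>
        · ext q
          obtain ⟨q, hq⟩ := q
          induction q using Quotient.ind with
          | _ x => rfl }
  set K := Φ.ker with hKdef
  have hKmem : ∀ τ : C, τ ∈ K → ∀ x : X, (τ : Equiv.Perm X) x = x ∨ (τ : Equiv.Perm X) x = σ x := by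
    intro τ hτ x
    have hτ1 : Φ τ = 1 := hτ
    have horb : (⟦(τ : Equiv.Perm X) x⟧ : Q) = ⟦x⟧ := by
      by_cases hx : fixedQ ⟦x⟧
      · have := congrArg (fun p : Equiv.Perm {q : Q // ¬ fixedQ q} × Equiv.Perm {q : Q // fixedQ q} =>
          (p.2 ⟨⟦x⟧, hx⟩ : {q : Q // fixedQ q})) hτ1
        exact congrArg Subtype.val this
      · have := congrArg (fun p : Equiv.Perm {q : Q // ¬ fixedQ q} × Equiv.Perm {q : Q // fixedQ q} =>
          (p.1 ⟨⟦x⟧, hx⟩ : {q : Q // ¬ fixedQ q})) hτ1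
        exact congrArg Subtype.val this
    have hr : s.r ((τ : Equiv.Perm X) x) x := Quotient.eq.mp horb
    rcases hr with h | h
    · exact Or.inl h.symm
    · right
      have := congrArg σ h
      rw [hσ2] at this
      exact this.symm
  -- the indicator homomorphism on the kernel
  let ind : Equiv.Perm X → X → ZMod 2 := fun τ x => if τ x = x then 0 else 1
  have hindwd : ∀ τ : C, ∀ a b : X, s.r a b → ind (τ : Equiv.Perm X) a = ind (τ : Equiv.Perm X) b := by
    rintro τ a b (rfl | rfl)
    · rfl
    · have key : ((τ : Equiv.Perm X) a = a) ↔ ((τ : Equiv.Perm X) (σ a) = σ a) := by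
        rw [hcomm τ τ.2 a]
        exact ⟨fun h => by rw [h], fun h => σ.injective h⟩
      simp only [ind]
      by_cases h : (τ : Equiv.Perm X) a = a
      · rw [if_pos h, if_pos (key.mp h)]
      · rw [if_neg h, if_neg (fun hc => h (key.mpr hc))]
  let Ψ : K →* ({q : Q // ¬ fixedQ q} → Multiplicative (ZMod 2)) :=
    { toFun := fun τ q => Multiplicative.ofAdd (Quotient.lift (ind ((τ : C) : Equiv.Perm X))
        (hindwd (τ : C)) q.1)
      map_one' := by
        funext q
        obtain ⟨q, hq⟩ := q
        induction q using Quotient.ind with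
        | _ x => simp [ind]
      map_mul' := by
        intro τ₁ τ₂
        funext q
        obtain ⟨q, hq⟩ := q
        induction q using Quotient.ind with
        | _ x =>
          have hxf : ¬ (σ x = x) := hq
          change Multiplicative.ofAdd (ind _ x) = Multiplicative.ofAdd (ind _ x) * Multiplicative.ofAdd (ind _ x)
          rw [← ofAdd_add]
          congr 1
          have happ : ((((τ₁ * τ₂ : K) : C) : Equiv.Perm X)) x
              = (((τ₁ : C) : Equiv.Perm X)) ((((τ₂ : C) : Equiv.Perm X)) x) := rfl
          rcases hKmem τ₂ τ₂.2 x with h2 | h2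
          · have h2' : (((τ₂ : C) : Equiv.Perm X)) x = x := h2
            simp [ind, happ, h2']
          · have h2x : (((τ₂ : C) : Equiv.Perm X)) x ≠ x := by rw [h2]; exact fun hc => hxf hc
            rcases hKmem τ₁ τ₁.2 x with h1 | h1
            · have h1s : (((τ₁ : C) : Equiv.Perm X)) (σ x) = σ x := by
                rw [hcomm _ (τ₁ : C).2 x, h1]
              simp only [ind, happ, h2, h1s, if_pos h1, if_neg h2x, if_neg hxf, zero_add]
            · have h1s : (((τ₁ : C) : Equiv.Perm X)) (σ x) = x := by
                rw [hcomm _ (τ₁ : C).2 x, h1, hσ2]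
              have h1x : (((τ₁ : C) : Equiv.Perm X)) x ≠ x := by rw [h1]; exact fun hc => hxf hc
              simp only [ind, happ, h2, h1s, if_neg h1x, if_neg h2x]
              simp only [if_true]
              decide }
  have hΨinj : Function.Injective Ψ := by
    rw [injective_iff_map_eq_one]
    intro τ hτ
    have hfix1 : ∀ x : X, (((τ : C) : Equiv.Perm X)) x = x := by
      intro x
      rcases hKmem τ τ.2 x with h | h
      · exact h
      · by_cases hxf : σ x = x
        · rw [h, hxf]
        · exfalso
          have := congrFun hτ ⟨⟦x⟧, hxf⟩
          have hval : ind (((τ : C) : Equiv.Perm X)) x = 0 := by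
            have h' : Multiplicative.ofAdd (ind (((τ : C) : Equiv.Perm X)) x) = 1 := this
            simpa using congrArg Multiplicative.toAdd h'
          have : ind (((τ : C) : Equiv.Perm X)) x = 1 := by
            simp only [ind, if_neg (h ▸ fun hc => hxf hc : (((τ : C) : Equiv.Perm X)) x ≠ x)]
          rw [this] at hval
          exact one_ne_zero hval
    refine Subtype.ext (Subtype.ext ?_)
    exact Equiv.ext fun x => hfix1 x
  -- cardinalities
  set k := Fintype.card {q : Q // ¬ fixedQ q} with hk
  set m := Fintype.card {q : Q // fixedQ q} with hm
  have hKcard : Nat.card K ∣ 2 ^ k := by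
    have h1 : Nat.card K = Nat.card Ψ.range := Nat.card_congr (MonoidHom.ofInjective hΨinj).toEquiv
    have h2 : Nat.card Ψ.range ∣ Nat.card ({q : Q // ¬ fixedQ q} → Multiplicative (ZMod 2)) :=
      Subgroup.card_subgroup_dvd_card _
    have h3 : Nat.card ({q : Q // ¬ fixedQ q} → Multiplicative (ZMod 2)) = 2 ^ k := by
      rw [Nat.card_fun]
      congr 1
      · simp [Nat.card_eq_fintype_card]
      · rw [Nat.card_eq_fintype_card]
    rw [h1, ← h3]
    exact h2
  have hQcard : Nat.card (C ⧸ K) ∣ k.factorial * m.factorial := by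
    have h1 : Nat.card (C ⧸ K) = Nat.card Φ.range :=
      Nat.card_congr (QuotientGroup.quotientKerEquivRange Φ).toEquiv
    have h2 : Nat.card Φ.range ∣
        Nat.card (Equiv.Perm {q : Q // ¬ fixedQ q} × Equiv.Perm {q : Q // fixedQ q}) :=
      Subgroup.card_subgroup_dvd_card _
    have h3 : Nat.card (Equiv.Perm {q : Q // ¬ fixedQ q} × Equiv.Perm {q : Q // fixedQ q})
        = k.factorial * m.factorial := by
      rw [Nat.card_prod, Nat.card_eq_fintype_card, Nat.card_eq_fintype_card,
        Fintype.card_perm, Fintype.card_perm]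
    rw [h1, ← h3]
    exact h2
  have hCdvd : Nat.card C ∣ k.factorial * m.factorial * 2 ^ k := by
    rw [Subgroup.card_eq_card_quotient_mul_card_subgroup K]
    exact mul_dvd_mul hQcard hKcard
  -- counting: 2 * k + m = 2 * n
  have hfib : ∀ y : X, (Finset.univ.filter (fun x : X => (⟦x⟧ : Q) = ⟦y⟧)).card
      = if σ y = y then 1 else 2 := by
    intro y
    have hset : (Finset.univ.filter (fun x : X => (⟦x⟧ : Q) = ⟦y⟧)) = ({y, σ y} : Finset X) := by
      ext x
      simp only [Finset.mem_filter, Finset.mem_univ, true_and, Finset.mem_insert,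
        Finset.mem_singleton]
      rw [Quotient.eq]
      constructor
      · rintro (rfl | h)
        · exact Or.inl rfl
        · right
          have := congrArg σ h
          rw [hσ2] at this
          exact this.symm
      · rintro (rfl | rfl)
        · exact Or.inl rfl
        · exact Or.inr (hσ2 y).symm
    rw [hset]
    by_cases hy : σ y = y
    · rw [if_pos hy, hy]
      simp
    · rw [if_neg hy]
      rw [Finset.card_insert_of_notMem
          (by simp only [Finset.mem_singleton]; exact fun hc => hy hc.symm),
        Finset.card_singleton]
  have hsum : 2 * k + m = 2 * n := by
    have h0 : Fintype.card X = ∑ q : Q, (Finset.univ.filter (fun x : X => (⟦x⟧ : Q) = q)).card :=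
      Finset.card_eq_sum_card_fiberwise (fun x _ => Finset.mem_univ _)
    have h1 : ∀ q : Q, (Finset.univ.filter (fun x : X => (⟦x⟧ : Q) = q)).card
        = if fixedQ q then 1 else 2 := by
      intro q
      induction q using Quotient.ind with
      | _ y => exact hfib y
    rw [hcard] at h0
    rw [Finset.sum_congr rfl (fun q _ => h1 q)] at h0
    rw [Finset.sum_ite, Finset.sum_const, Finset.sum_const, smul_eq_mul, smul_eq_mul,
      mul_one] at h0
    have hmf : (Finset.univ.filter fixedQ).card = m := (Fintype.card_subtype _).symm
    have hkf : (Finset.univ.filter (fun q : Q => ¬ fixedQ q)).card = k :=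
      (Fintype.card_subtype _).symm
    rw [hmf, hkf] at h0
    omega
  -- m ≤ 2
  have hout : ∀ q : Q, fixedQ q → σ q.out = q.out := by
    intro q hq
    have : fixedQ ⟦q.out⟧ := by rwa [Quotient.out_eq]
    exact this
  have hm2 : m ≤ 2 := by
    rcases isEmpty_or_nonempty {q : Q // fixedQ q} with hE | hNE
    · rw [hm, Fintype.card_eq_zero]
      omega
    · obtain ⟨a⟩ := hNE
      have hinj : Function.Injective (fun q : {q : Q // fixedQ q} => decide (q = a)) := by
        intro q r h
        by_cases hqa : q = a
        · by_cases hra : r = a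
          · rw [hqa, hra]
          · simp [hqa, hra] at h
        · by_cases hra : r = a
          · simp [hqa, hra] at h
          · rcases hfix q.1.out a.1.out r.1.out (hout _ q.2) (hout _ a.2) (hout _ r.2)
              with h1 | h1 | h1
            · exact absurd (Subtype.ext (by rw [← Quotient.out_eq q.1, ← Quotient.out_eq a.1, h1]))
                hqa
            · exact Subtype.ext (by rw [← Quotient.out_eq q.1, ← Quotient.out_eq r.1, h1])
            · exact absurd (Subtype.ext (by rw [← Quotient.out_eq r.1, ← Quotient.out_eq a.1,
                ← h1])) hra
      calc m ≤ Fintype.card Bool := Fintype.card_le_of_injective _ hinj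
      _ = 2 := by simp
  -- final arithmetic
  have hcases : m = 0 ∨ m = 2 := by omega
  rcases hcases with hm0 | hm0
  · have hkn : k = n := by omega
    have : k.factorial * m.factorial * 2 ^ k = 2 ^ n * n.factorial := by
      rw [hm0, hkn]
      simp [Nat.factorial]
      ring
    rw [this] at hCdvd
    exact hCdvd
  · have hkn : k + 1 = n := by omega
    refine hCdvd.trans ?_
    have : k.factorial * m.factorial * 2 ^ k = 2 ^ n * k.factorial := by
      rw [hm0, ← hkn]
      simp [Nat.factorial]
      ring
    rw [this]
    exact mul_dvd_mul_left _ (Nat.factorial_dvd_factorial (by omega))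

theorem bReciprocal_roots (n : ℕ) (hn : 1 ≤ n) (b : ℤ) (hb : b ≠ 0) (f : Polynomial ℤ)
    (hdeg : f.degree = (2 * n : ℕ))
    (hrec : ∀ i ≤ n, f.coeff (n - i) = b ^ i * f.coeff (n + i))
    (hsep : (f.map (Int.castRingHom ℚ)).Separable) :
    (∀ x : (f.map (Int.castRingHom ℚ)).SplittingField,
        aeval x (f.map (Int.castRingHom ℚ)) = 0 → x ≠ 0) ∧
    Set.BijOn
      (fun x : (f.map (Int.castRingHom ℚ)).SplittingField =>
        (b : (f.map (Int.castRingHom ℚ)).SplittingField) / x)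
      {x | aeval x (f.map (Int.castRingHom ℚ)) = 0}
      {x | aeval x (f.map (Int.castRingHom ℚ)) = 0} ∧
    Nat.card (f.map (Int.castRingHom ℚ)).Gal ∣ 2 ^ n * n.factorial := by
  classical
  set F := f.map (Int.castRingHom ℚ) with hF
  set L := F.SplittingField with hL
  -- basic facts about f
  have hnd : f.natDegree = 2 * n := natDegree_eq_of_degree_eq_some hdeg
  have hf0 : f ≠ 0 := fun h => by
    rw [h, degree_zero] at hdeg
    exact WithBot.bot_ne_coe hdeg
  have hlc : f.coeff (2 * n) ≠ 0 := by
    rw [← hnd]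
    exact mt leadingCoeff_eq_zero.mp hf0
  have hc0 : f.coeff 0 ≠ 0 := by
    have h := hrec n le_rfl
    rw [Nat.sub_self, ← two_mul] at h
    rw [h]
    exact mul_ne_zero (pow_ne_zero _ hb) hlc
  -- the key polynomial identity
  have hrND : (reflect (2 * n) f).natDegree = 2 * n := by
    refine le_antisymm (natDegree_le_iff_coeff_eq_zero.mpr fun N hN => ?_)
      (le_natDegree_of_ne_zero ?_)
    · rw [coeff_reflect, revAt_eq_self_of_lt hN]
      exact coeff_eq_zero_of_natDegree_lt (by omega)
    · rw [coeff_reflect, revAt_le le_rfl, Nat.sub_self]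
      exact hc0
  have hkey : (reflect (2 * n) f).scaleRoots b = C (b ^ n) * f := by
    ext j
    rw [coeff_scaleRoots, hrND, coeff_reflect, coeff_C_mul]
    by_cases hj : j ≤ 2 * n
    · rw [revAt_le hj]
      by_cases hjn : j ≤ n
      · have h := hrec (n - j) (by omega)
        have e1 : n - (n - j) = j := by omega
        have e2 : n + (n - j) = 2 * n - j := by omega
        rw [e1, e2] at h
        rw [h, ← mul_assoc, ← pow_add]
        have e3 : n + (n - j) = 2 * n - j := by omega
        rw [e3]
        ring
      · have h := hrec (j - n) (by omega)
        have e1 : n - (j - n) = 2 * n - j := by omega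
        have e2 : n + (j - n) = j := by omega
        rw [e1, e2] at h
        rw [h, mul_right_comm, ← pow_add]
        have e3 : j - n + (2 * n - j) = n := by omega
        rw [e3]
    · rw [revAt_eq_self_of_lt (by omega)]
      have hcj : f.coeff j = 0 := coeff_eq_zero_of_natDegree_lt (by omega)
      rw [hcj]
      ring
  -- the splitting field
  haveI : CharZero L := charZero_of_injective_algebraMap (algebraMap ℚ L).injective
  haveI : Fact ((F.map (algebraMap ℚ L)).Splits) := ⟨SplittingField.splits F⟩
  have hbL0 : (b : L) ≠ 0 := Int.cast_ne_zero.mpr hb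
  have haux : ∀ x : L, aeval x F = aeval x f := fun x => aeval_map_algebraMap ℚ x f
  -- no root is zero
  have hne : ∀ x : L, aeval x F = 0 → x ≠ 0 := by
    rintro x hx rfl
    rw [haux, aeval_def, eval₂_at_zero] at hx
    have : algebraMap ℤ L (f.coeff 0) = (f.coeff 0 : L) := by
      simp
    rw [this] at hx
    exact Int.cast_ne_zero.mpr hc0 hx
  -- roots map to roots under x ↦ b / x
  have hmap : ∀ x : L, aeval x F = 0 → x ≠ 0 → aeval ((b : L) / x) F = 0 := by
    intro x hx hx0
    rw [haux] at hx ⊢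
    haveI := invertibleOfNonzero hx0
    have h1 : eval₂ (algebraMap ℤ L) (⅟x) (reflect (2 * n) f) = 0 :=
      (eval₂_reflect_eq_zero_iff (algebraMap ℤ L) x (2 * n) f (le_of_eq hnd)).mpr
        (by rwa [aeval_def] at hx)
    have h2 := scaleRoots_eval₂_eq_zero (algebraMap ℤ L) (s := b) h1
    rw [hkey, eval₂_mul, eval₂_C] at h2
    have hbn : algebraMap ℤ L (b ^ n) ≠ 0 := by
      simpa using pow_ne_zero n hbL0
    have h3 : eval₂ (algebraMap ℤ L) (algebraMap ℤ L b * ⅟x) f = 0 :=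
      (mul_eq_zero.mp h2).resolve_left hbn
    have harg : algebraMap ℤ L b * ⅟x = (b : L) / x := by
      rw [invOf_eq_inv, div_eq_mul_inv]
      simp
    rw [harg] at h3
    rw [aeval_def]
    exact h3
  -- the inversion identity
  have hdd : ∀ x : L, (b : L) / ((b : L) / x) = x := by
    intro x
    rw [div_div_eq_mul_div, mul_comm, mul_div_assoc, div_self hbL0, mul_one]
  refine ⟨hne, ⟨?_, ?_, ?_⟩, ?_⟩
  · intro x hx
    exact hmap x hx (hne x hx)
  · intro x hx y hy h
    have h' : (b : L) / x = (b : L) / y := h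
    have : x = (b : L) / ((b : L) / x) := (hdd x).symm
    rw [this, h', hdd]
  · intro y hy
    exact ⟨(b : L) / y, hmap y hy (hne y hy), hdd y⟩
  -- the Galois part
  · have hFnd : F.natDegree = 2 * n := by
      have hdm : F.degree = f.degree := degree_map_eq_of_injective Int.cast_injective f
      exact natDegree_eq_of_degree_eq_some (hdm.trans hdeg)
    have hFne : F ≠ 0 := fun h => by
      rw [h] at hFnd
      simp at hFnd
      omega
    have hmem : ∀ x : L, x ∈ F.rootSet L ↔ aeval x F = 0 := by
      intro x
      rw [mem_rootSet]
      exact and_iff_right hFne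
    have hinv : Function.Involutive (fun x : F.rootSet L =>
        (⟨(b : L) / x, (hmem _).mpr (hmap x ((hmem _).mp x.2) (hne x ((hmem _).mp x.2)))⟩ :
          F.rootSet L)) := fun x => Subtype.ext (hdd x)
    set σ := hinv.toPerm _ with hσdef
    have hσσ : σ * σ = 1 := Equiv.ext fun x => hinv x
    have hσval : ∀ x : F.rootSet L, (↑(σ x) : L) = (b : L) / ↑x := fun x => rfl
    have hcardX : Fintype.card (F.rootSet L) = 2 * n := by
      convert (card_rootSet_eq_natDegree (K := L) hsep (SplittingField.splits F)).trans hFnd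
      · rfl
      · rfl
      · exact Subsingleton.elim _ _
    have hsq : ∀ x : F.rootSet L, σ x = x → (↑x : L) * ↑x = (b : L) := by
      intro x hx
      have hval : (b : L) / ↑x = ↑x := by
        rw [← hσval x, hx]
      have hx0 : (↑x : L) ≠ 0 := hne x ((hmem _).mp x.2)
      rw [div_eq_iff hx0] at hval
      rw [← hval]
    have hfix3 : ∀ x y z : F.rootSet L, σ x = x → σ y = y → σ z = z →
        x = y ∨ x = z ∨ y = z := by
      intro x y z hx hy hz
      have hxy : (↑y : L) = ↑x ∨ (↑y : L) = -↑x :=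
        mul_self_eq_mul_self_iff.mp ((hsq y hy).trans (hsq x hx).symm)
      have hxz : (↑z : L) = ↑x ∨ (↑z : L) = -↑x :=
        mul_self_eq_mul_self_iff.mp ((hsq z hz).trans (hsq x hx).symm)
      rcases hxy with h1 | h1
      · exact Or.inl (Subtype.ext h1.symm)
      · rcases hxz with h2 | h2
        · exact Or.inr (Or.inl (Subtype.ext h2.symm))
        · exact Or.inr (Or.inr (Subtype.ext (h1.trans h2.symm)))
    have hcent : (Gal.galActionHom F L).range ≤ Subgroup.centralizer {σ} := by
      rintro _ ⟨g, rfl⟩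
      rw [Subgroup.mem_centralizer_singleton_iff]
      haveI : Normal ℚ L := SplittingField.instNormal F
      obtain ⟨ϕ, rfl⟩ := Gal.restrict_surjective F L g
      refine Equiv.ext fun x => ?_
      refine Subtype.ext ?_
      rw [Equiv.Perm.mul_apply, Equiv.Perm.mul_apply]
      rw [hσval, Gal.galActionHom_restrict, Gal.galActionHom_restrict, hσval]
      rw [map_div₀, map_intCast]
    have hGcard : Nat.card F.Gal = Nat.card (Gal.galActionHom F L).range :=
      Nat.card_congr (MonoidHom.ofInjective (Gal.galActionHom_injective F L)).toEquiv
    rw [hGcard]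
    exact (Subgroup.card_dvd_of_le hcent).trans
      (centralizer_involution_card_dvd n σ hσσ hcardX hfix3)
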